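/- For every natural number n, a₁(2n+1) = a₁(n) + a₂(n). -/

import Mathlib

open Polynomial

/-- `a₁ n` : number of nonzero coefficients of `(1+x+x²)ⁿ` over `𝔽₂`. -/
noncomputable def a1 (n : ℕ) : ℕ :=
  (((1 + X + X ^ 2 : (ZMod 2)[X]) ^ n).support).card

/-- `a₂ n` : number of nonzero coefficients of `(1+x)(1+x+x²)ⁿ` over `𝔽₂`. -/
noncomputable def a2 (n : ℕ) : ℕ :=
  (((1 + X) * (1 + X + X ^ 2 : (ZMod 2)[X]) ^ n).support).card

lemma sq_eq_expand (f : (ZMod 2)[X]) : f ^ 2 = expand (ZMod 2) 2 f := by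
  have h := Polynomial.map_frobenius_expand (p := 2) f
  rw [ZMod.frobenius_zmod, Polynomial.map_id] at h
  exact h.symm

lemma key (n : ℕ) :
    ((1 + X + X ^ 2 : (ZMod 2)[X]) ^ (2*n+1)) =
      expand (ZMod 2) 2 ((1 + X) * (1 + X + X ^ 2) ^ n)
        + X * expand (ZMod 2) 2 ((1 + X + X ^ 2) ^ n) := by
  have h2 : ((1 : (ZMod 2)[X]) + X) ^ 2 = 1 + X ^ 2 := by
    rw [add_pow_char]; simp
  rw [map_mul, ← sq_eq_expand, ← sq_eq_expand, h2]
  ring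

lemma coeff_X_mul_expand_even (h : (ZMod 2)[X]) (k : ℕ) :
    (X * expand (ZMod 2) 2 h).coeff (2 * k) = 0 := by
  cases k with
  | zero => simp
  | succ k =>
    have : 2 * (k + 1) = (2 * k + 1) + 1 := by ring
    rw [this, coeff_X_mul, coeff_expand (by norm_num)]
    simp [Nat.two_dvd_ne_zero.mpr (by omega : (2 * k + 1) % 2 = 1)]

lemma coeff_expand_odd (h : (ZMod 2)[X]) (k : ℕ) :
    (expand (ZMod 2) 2 h).coeff (2 * k + 1) = 0 := by
  rw [coeff_expand (by norm_num)]
  simp [Nat.two_dvd_ne_zero.mpr (by omega : (2 * k + 1) % 2 = 1)]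

theorem a1_two_mul_add_one (n : ℕ) : a1 (2 * n + 1) = a1 n + a2 n := by
  set P : (ZMod 2)[X] := (1 + X + X ^ 2) ^ n with hP
  set g : (ZMod 2)[X] := (1 + X) * P with hg
  have hc_even : ∀ k, ((1 + X + X ^ 2 : (ZMod 2)[X]) ^ (2*n+1)).coeff (2 * k) = g.coeff k := by
    intro k
    rw [key, coeff_add, coeff_X_mul_expand_even, coeff_expand_mul' (by norm_num), add_zero]
  have hc_odd : ∀ k, ((1 + X + X ^ 2 : (ZMod 2)[X]) ^ (2*n+1)).coeff (2 * k + 1) = P.coeff k := by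
    intro k
    rw [key, coeff_add, coeff_expand_odd]
    have : 2 * k + 1 = (2 * k) + 1 := rfl
    rw [this, coeff_X_mul, coeff_expand_mul' (by norm_num), zero_add]
  have hsupp : ((1 + X + X ^ 2 : (ZMod 2)[X]) ^ (2*n+1)).support =
      (g.support.image (fun k => 2 * k)) ∪ (P.support.image (fun k => 2 * k + 1)) := by
    ext m
    simp only [mem_support_iff, Finset.mem_union, Finset.mem_image]
    rcases Nat.even_or_odd m with ⟨k, hk⟩ | ⟨k, hk⟩
    · have hm : m = 2 * k := by omega
      subst hm
      rw [hc_even]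
      constructor
      · intro h; exact Or.inl ⟨k, h, rfl⟩
      · rintro (⟨j, hj, hjk⟩ | ⟨j, hj, hjk⟩)
        · have : j = k := by omega
          subst this; exact hj
        · omega
    · have hm : m = 2 * k + 1 := by omega
      subst hm
      rw [hc_odd]
      constructor
      · intro h; exact Or.inr ⟨k, h, rfl⟩
      · rintro (⟨j, hj, hjk⟩ | ⟨j, hj, hjk⟩)
        · omega
        · have : j = k := by omega
          subst this; exact hj
  have hdisj : Disjoint (g.support.image (fun k => 2 * k))
      (P.support.image (fun k => 2 * k + 1)) := by
    rw [Finset.disjoint_left]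
    rintro m hm hm'
    simp only [Finset.mem_image] at hm hm'
    obtain ⟨j, _, hj⟩ := hm
    obtain ⟨j', _, hj'⟩ := hm'
    omega
  have h1 : (g.support.image (fun k => 2 * k)).card = g.support.card :=
    Finset.card_image_of_injective _ (fun a b h => by omega)
  have h2 : (P.support.image (fun k => 2 * k + 1)).card = P.support.card :=
    Finset.card_image_of_injective _ (fun a b h => by omega)
  show ((1 + X + X ^ 2 : (ZMod 2)[X]) ^ (2*n+1)).support.card = P.support.card + g.support.card
  rw [hsupp, Finset.card_union_of_disjoint hdisj, h1, h2, add_comm]
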